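/- Let f : ℝ → ℝ be continuously differentiable, fix a point (a₀,E₀,c₀) ∈ ℝ³ with c₀ ≠ 0, and let u : ℝ × ℝ³ → ℝ be a C³ family such that for all x and all (a,E,c) near (a₀,E₀,c₀), c·∂ₓ²u(x,a,E,c) - (c-1)·u(x,a,E,c) + f(u(x,a,E,c)) = a. Let T, M : ℝ³ → ℝ be differentiable at (a₀,E₀,c₀), and write {T,M}_{α,β} = ∂_αT·∂_βM - ∂_βT·∂_αM (partials evaluated at (a₀,E₀,c₀)). Define φ₂(x) := {T,M}_{E,c}·∂ₐu(x,a₀,E₀,c₀) - {T,M}_{a,c}·∂_E u(x,a₀,E₀,c₀) + {T,M}_{a,E}·∂_c u(x,a₀,E₀,c₀). Then for all x ∈ ℝ: -c₀·φ₂''(x) + (c₀-1)·φ₂(x) - f'(u(x,a₀,E₀,c₀))·φ₂(x) = -{T,M}_{E,c} + {T,M}_{a,E}·(∂ₓ²u(x,a₀,E₀,c₀) - u(x,a₀,E₀,c₀)), and consequently ∂ₓ[-c₀φ₂'' + (c₀-1)φ₂ - f'(u)φ₂] = {T,M}_{a,E}·(∂ₓ³u - ∂ₓu). -/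

import Mathlib

namespace Stmt11Aux

abbrev P4 := ℝ × ℝ × ℝ × ℝ

noncomputable def pd (w : P4) (g : P4 → ℝ) : P4 → ℝ := fun p => fderiv ℝ g p w

def V (u : ℝ → ℝ → ℝ → ℝ → ℝ) : P4 → ℝ := fun q => u q.1 q.2.1 q.2.2.1 q.2.2.2

lemma contDiff_pd2 {g : P4 → ℝ} (hg : ContDiff ℝ 3 g) (w : P4) :
    ContDiff ℝ 2 (pd w g) :=
  ((ContinuousLinearMap.apply ℝ ℝ w).contDiff).comp (hg.fderiv_right (m := 2) (by norm_num))

lemma contDiff_pd1 {g : P4 → ℝ} (hg : ContDiff ℝ 2 g) (w : P4) :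
    ContDiff ℝ 1 (pd w g) :=
  ((ContinuousLinearMap.apply ℝ ℝ w).contDiff).comp (hg.fderiv_right (m := 1) (by norm_num))

lemma pd_comm {g : P4 → ℝ} (hg : ContDiff ℝ 2 g) (w₁ w₂ : P4) (p : P4) :
    pd w₁ (pd w₂ g) p = pd w₂ (pd w₁ g) p := by
  have hgd : Differentiable ℝ g := hg.differentiable (by norm_num)
  have hd : Differentiable ℝ (fderiv ℝ g) :=
    (hg.fderiv_right (m := 1) (by norm_num)).differentiable (by norm_num)
  have key : ∀ w w' : P4, pd w (pd w' g) p = fderiv ℝ (fderiv ℝ g) p w w' := by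
    intro w w'
    have h : HasFDerivAt (fun q => fderiv ℝ g q w')
        ((ContinuousLinearMap.apply ℝ ℝ w').comp (fderiv ℝ (fderiv ℝ g) p)) p :=
      ((ContinuousLinearMap.apply ℝ ℝ w').hasFDerivAt).comp p (hd p).hasFDerivAt
    show fderiv ℝ (fun q => fderiv ℝ g q w') p w = _
    rw [h.fderiv]
    rfl
  rw [key, key]
  exact second_derivative_symmetric (f := g) (fun y => (hgd y).hasFDerivAt)
    (hd p).hasFDerivAt w₁ w₂

def ex : P4 := (1, 0, 0, 0)

lemma deriv_slice1 {g : P4 → ℝ} (hg : Differentiable ℝ g) (x a E c : ℝ) :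
    deriv (fun y => g (y, a, E, c)) x = pd ex g (x, a, E, c) := by
  have hline : HasDerivAt (fun y : ℝ => ((y, a, E, c) : P4)) ex x :=
    HasDerivAt.prodMk (hasDerivAt_id x) (HasDerivAt.prodMk (hasDerivAt_const x a)
      (HasDerivAt.prodMk (hasDerivAt_const x E) (hasDerivAt_const x c)))
  exact ((hg _).hasFDerivAt.comp_hasDerivAt x hline).deriv

lemma deriv_slice2 {g : P4 → ℝ} (hg : Differentiable ℝ g)
    (hg' : Differentiable ℝ (pd ex g)) (x a E c : ℝ) :
    deriv (deriv (fun y => g (y, a, E, c))) x = pd ex (pd ex g) (x, a, E, c) := by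
  have h : deriv (fun y => g (y, a, E, c)) = fun y => pd ex g (y, a, E, c) :=
    funext fun y => deriv_slice1 hg y a E c
  rw [h, deriv_slice1 hg']

lemma deriv_slice3 {g : P4 → ℝ} (hg : Differentiable ℝ g)
    (hg' : Differentiable ℝ (pd ex g)) (hg'' : Differentiable ℝ (pd ex (pd ex g)))
    (x a E c : ℝ) :
    deriv (deriv (deriv (fun y => g (y, a, E, c)))) x
      = pd ex (pd ex (pd ex g)) (x, a, E, c) := by
  have h : deriv (fun y => g (y, a, E, c)) = fun y => pd ex g (y, a, E, c) :=
    funext fun y => deriv_slice1 hg y a E c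
  rw [h, deriv_slice2 hg' hg'']

lemma deriv_sliceA {g : P4 → ℝ} (hg : Differentiable ℝ g) (x a E c : ℝ) :
    deriv (fun t => g (x, t, E, c)) a = pd (0, 1, 0, 0) g (x, a, E, c) := by
  have hline : HasDerivAt (fun t : ℝ => ((x, t, E, c) : P4)) ((0, 1, 0, 0) : P4) a :=
    HasDerivAt.prodMk (hasDerivAt_const a x) (HasDerivAt.prodMk (hasDerivAt_id a)
      (HasDerivAt.prodMk (hasDerivAt_const a E) (hasDerivAt_const a c)))
  exact ((hg _).hasFDerivAt.comp_hasDerivAt a hline).deriv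

lemma deriv_sliceE {g : P4 → ℝ} (hg : Differentiable ℝ g) (x a E c : ℝ) :
    deriv (fun t => g (x, a, t, c)) E = pd (0, 0, 1, 0) g (x, a, E, c) := by
  have hline : HasDerivAt (fun t : ℝ => ((x, a, t, c) : P4)) ((0, 0, 1, 0) : P4) E :=
    HasDerivAt.prodMk (hasDerivAt_const E x) (HasDerivAt.prodMk (hasDerivAt_const E a)
      (HasDerivAt.prodMk (hasDerivAt_id E) (hasDerivAt_const E c)))
  exact ((hg _).hasFDerivAt.comp_hasDerivAt E hline).deriv

lemma deriv_sliceC {g : P4 → ℝ} (hg : Differentiable ℝ g) (x a E c : ℝ) :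
    deriv (fun t => g (x, a, E, t)) c = pd (0, 0, 0, 1) g (x, a, E, c) := by
  have hline : HasDerivAt (fun t : ℝ => ((x, a, E, t) : P4)) ((0, 0, 0, 1) : P4) c :=
    HasDerivAt.prodMk (hasDerivAt_const c x) (HasDerivAt.prodMk (hasDerivAt_const c a)
      (HasDerivAt.prodMk (hasDerivAt_const c E) (hasDerivAt_id c)))
  exact ((hg _).hasFDerivAt.comp_hasDerivAt c hline).deriv

lemma pd_comb (A B C : ℝ) {g h k : P4 → ℝ} (hg : Differentiable ℝ g)
    (hh : Differentiable ℝ h) (hk : Differentiable ℝ k) (w p : P4) :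
    pd w (fun p => A * g p - B * h p + C * k p) p
      = A * pd w g p - B * pd w h p + C * pd w k p := by
  have H : HasFDerivAt (fun p => A * g p - B * h p + C * k p)
      ((A • fderiv ℝ g p - B • fderiv ℝ h p) + C • fderiv ℝ k p) p :=
    (((hg p).hasFDerivAt.const_mul A).sub ((hh p).hasFDerivAt.const_mul B)).add
      ((hk p).hasFDerivAt.const_mul C)
  show fderiv ℝ (fun p => A * g p - B * h p + C * k p) p w = _
  rw [H.fderiv]
  simp [pd]

lemma pd_const_add (d C : ℝ) {g h : P4 → ℝ} (hg : Differentiable ℝ g)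
    (hh : Differentiable ℝ h) (w p : P4) :
    pd w (fun p => d + C * (g p - h p)) p = C * (pd w g p - pd w h p) := by
  have H : HasFDerivAt (fun p => d + C * (g p - h p))
      (C • (fderiv ℝ g p - fderiv ℝ h p)) p :=
    (((hg p).hasFDerivAt.sub (hh p).hasFDerivAt).const_mul C).const_add d
  show fderiv ℝ (fun p => d + C * (g p - h p)) p w = _
  rw [H.fderiv]
  simp [pd]

lemma ode_key {v : P4 → ℝ} (hv : ContDiff ℝ 3 v) {f : ℝ → ℝ} (hf : ContDiff ℝ 1 f)
    {a₀ E₀ c₀ : ℝ}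
    (hode : ∀ᶠ q : ℝ × ℝ × ℝ in nhds (a₀, E₀, c₀), ∀ y : ℝ,
      q.2.2 * pd ex (pd ex v) (y, q.1, q.2.1, q.2.2)
        - (q.2.2 - 1) * v (y, q.1, q.2.1, q.2.2) + f (v (y, q.1, q.2.1, q.2.2)) = q.1)
    (x wa wE wc : ℝ) :
    wc * pd ex (pd ex v) (x, a₀, E₀, c₀)
      + c₀ * pd (0, wa, wE, wc) (pd ex (pd ex v)) (x, a₀, E₀, c₀)
      - (wc * v (x, a₀, E₀, c₀) + (c₀ - 1) * pd (0, wa, wE, wc) v (x, a₀, E₀, c₀))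
      + deriv f (v (x, a₀, E₀, c₀)) * pd (0, wa, wE, wc) v (x, a₀, E₀, c₀) - wa = 0 := by
  have hvd : Differentiable ℝ v := hv.differentiable (by norm_num)
  have hg2d : Differentiable ℝ (pd ex (pd ex v)) :=
    (contDiff_pd1 (contDiff_pd2 hv ex) ex).differentiable one_ne_zero
  have hfd : Differentiable ℝ f := hf.differentiable one_ne_zero
  have hLa : HasDerivAt (fun t : ℝ => a₀ + t * wa) wa 0 := (hasDerivAt_mul_const wa).const_add a₀
  have hLE : HasDerivAt (fun t : ℝ => E₀ + t * wE) wE 0 := (hasDerivAt_mul_const wE).const_add E₀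
  have hLc : HasDerivAt (fun t : ℝ => c₀ + t * wc) wc 0 := (hasDerivAt_mul_const wc).const_add c₀
  have hline : HasDerivAt (fun t : ℝ => ((x, a₀ + t * wa, E₀ + t * wE, c₀ + t * wc) : P4))
      ((0, wa, wE, wc) : P4) 0 := HasDerivAt.prodMk (hasDerivAt_const (0:ℝ) x) (HasDerivAt.prodMk hLa (HasDerivAt.prodMk hLE hLc))
  have hvL := ((hvd _).hasFDerivAt).comp_hasDerivAt 0 hline
  have hg2L := ((hg2d _).hasFDerivAt).comp_hasDerivAt 0 hline
  have hfL := HasDerivAt.comp (x := (0:ℝ)) ((hfd _).hasDerivAt) hvL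
  have H := (((hLc.mul hg2L).sub ((hLc.sub_const 1).mul hvL)).add hfL).sub hLa
  have htend : Filter.Tendsto
      (fun t : ℝ => ((a₀ + t * wa, E₀ + t * wE, c₀ + t * wc) : ℝ × ℝ × ℝ))
      (nhds 0) (nhds (a₀, E₀, c₀)) := by
    have hc : Continuous
        (fun t : ℝ => ((a₀ + t * wa, E₀ + t * wE, c₀ + t * wc) : ℝ × ℝ × ℝ)) := by fun_prop
    simpa using hc.tendsto 0
  have hEv : (fun _ : ℝ => (0 : ℝ)) =ᶠ[nhds (0:ℝ)]
      (fun t : ℝ => ((c₀ + t * wc) * pd ex (pd ex v) (x, a₀ + t * wa, E₀ + t * wE, c₀ + t * wc)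
        - ((c₀ + t * wc) - 1) * v (x, a₀ + t * wa, E₀ + t * wE, c₀ + t * wc)
        + f (v (x, a₀ + t * wa, E₀ + t * wE, c₀ + t * wc))) - (a₀ + t * wa)) := by
    filter_upwards [htend.eventually hode] with t ht
    have h := ht x
    linarith [h]
  have hkey := (H.congr_of_eventuallyEq hEv).unique (hasDerivAt_const 0 0)
  norm_num at hkey
  exact hkey

end Stmt11Aux

open Stmt11Aux

/-- The Jordan chain identity: with
`φ₂ = {T,M}_{E,c} u_a - {T,M}_{a,c} u_E + {T,M}_{a,E} u_c`, one has
`L φ₂ = -{T,M}_{E,c} + {T,M}_{a,E} (u_xx - u)` and hence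
`∂ₓ (L φ₂) = {T,M}_{a,E} (u_xxx - u_x)`, i.e. `A φ₂ = -φ₁`. -/
theorem stmt_11 (f : ℝ → ℝ) (hf : ContDiff ℝ 1 f)
    (a₀ E₀ c₀ : ℝ) (hc₀ : c₀ ≠ 0)
    (u : ℝ → ℝ → ℝ → ℝ → ℝ)
    (hu : ContDiff ℝ 3 (fun q : ℝ × ℝ × ℝ × ℝ => u q.1 q.2.1 q.2.2.1 q.2.2.2))
    (hode : ∀ᶠ q : ℝ × ℝ × ℝ in nhds (a₀, E₀, c₀), ∀ x : ℝ,
      q.2.2 * deriv (deriv (fun y => u y q.1 q.2.1 q.2.2)) x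
        - (q.2.2 - 1) * u x q.1 q.2.1 q.2.2 + f (u x q.1 q.2.1 q.2.2) = q.1)
    (T M : ℝ → ℝ → ℝ → ℝ)
    (hT : DifferentiableAt ℝ (fun q : ℝ × ℝ × ℝ => T q.1 q.2.1 q.2.2) (a₀, E₀, c₀))
    (hM : DifferentiableAt ℝ (fun q : ℝ × ℝ × ℝ => M q.1 q.2.1 q.2.2) (a₀, E₀, c₀)) :
    let TMEc := deriv (fun t => T a₀ t c₀) E₀ * deriv (fun t => M a₀ E₀ t) c₀
      - deriv (fun t => T a₀ E₀ t) c₀ * deriv (fun t => M a₀ t c₀) E₀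
    let TMac := deriv (fun t => T t E₀ c₀) a₀ * deriv (fun t => M a₀ E₀ t) c₀
      - deriv (fun t => T a₀ E₀ t) c₀ * deriv (fun t => M t E₀ c₀) a₀
    let TMaE := deriv (fun t => T t E₀ c₀) a₀ * deriv (fun t => M a₀ t c₀) E₀
      - deriv (fun t => T a₀ t c₀) E₀ * deriv (fun t => M t E₀ c₀) a₀
    let φ : ℝ → ℝ := fun y => TMEc * deriv (fun t => u y t E₀ c₀) a₀
      - TMac * deriv (fun t => u y a₀ t c₀) E₀
      + TMaE * deriv (fun t => u y a₀ E₀ t) c₀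
    ∀ x : ℝ,
      (-c₀ * deriv (deriv φ) x + (c₀ - 1) * φ x - deriv f (u x a₀ E₀ c₀) * φ x
        = -TMEc + TMaE * (deriv (deriv (fun y => u y a₀ E₀ c₀)) x - u x a₀ E₀ c₀)) ∧
      deriv (fun y => -c₀ * deriv (deriv φ) y + (c₀ - 1) * φ y
          - deriv f (u y a₀ E₀ c₀) * φ y) x
        = TMaE * (deriv (deriv (deriv (fun y => u y a₀ E₀ c₀))) x
            - deriv (fun y => u y a₀ E₀ c₀) x) := by
  intro TMEc TMac TMaE φ
  have h3 : ContDiff ℝ 3 (V u) := hu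
  have hvd : Differentiable ℝ (V u) := h3.differentiable (by norm_num)
  have h2 : ContDiff ℝ 2 (V u) := h3.of_le (by norm_num)
  have hd1 : ∀ w, Differentiable ℝ (pd w (V u)) := fun w =>
    (contDiff_pd2 h3 w).differentiable (by norm_num)
  have hd2 : ∀ w w', Differentiable ℝ (pd w' (pd w (V u))) := fun w w' =>
    (contDiff_pd1 (contDiff_pd2 h3 w) w').differentiable one_ne_zero
  have hodepd : ∀ᶠ q : ℝ × ℝ × ℝ in nhds (a₀, E₀, c₀), ∀ y : ℝ,
      q.2.2 * pd ex (pd ex (V u)) (y, q.1, q.2.1, q.2.2)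
        - (q.2.2 - 1) * V u (y, q.1, q.2.1, q.2.2) + f (V u (y, q.1, q.2.1, q.2.2)) = q.1 := by
    filter_upwards [hode] with q hq y
    have h2s := deriv_slice2 (g := V u) hvd (hd1 ex) y q.1 q.2.1 q.2.2
    rw [← h2s]
    exact hq y
  have hsA : ∀ y : ℝ, deriv (fun t => u y t E₀ c₀) a₀
      = pd (0,1,0,0) (V u) (y, a₀, E₀, c₀) := fun y => deriv_sliceA hvd y a₀ E₀ c₀
  have hsE : ∀ y : ℝ, deriv (fun t => u y a₀ t c₀) E₀
      = pd (0,0,1,0) (V u) (y, a₀, E₀, c₀) := fun y => deriv_sliceE hvd y a₀ E₀ c₀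
  have hsC : ∀ y : ℝ, deriv (fun t => u y a₀ E₀ t) c₀
      = pd (0,0,0,1) (V u) (y, a₀, E₀, c₀) := fun y => deriv_sliceC hvd y a₀ E₀ c₀
  have hφ : φ = fun y => TMEc * pd (0,1,0,0) (V u) (y, a₀, E₀, c₀)
      - TMac * pd (0,0,1,0) (V u) (y, a₀, E₀, c₀)
      + TMaE * pd (0,0,0,1) (V u) (y, a₀, E₀, c₀) := by
    funext y
    show TMEc * deriv (fun t => u y t E₀ c₀) a₀ - TMac * deriv (fun t => u y a₀ t c₀) E₀
      + TMaE * deriv (fun t => u y a₀ E₀ t) c₀ = _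
    rw [hsA y, hsE y, hsC y]
  have hΨd : Differentiable ℝ (fun p : P4 => TMEc * pd (0,1,0,0) (V u) p
      - TMac * pd (0,0,1,0) (V u) p + TMaE * pd (0,0,0,1) (V u) p) :=
    (((hd1 _).const_mul TMEc).sub ((hd1 _).const_mul TMac)).add ((hd1 _).const_mul TMaE)
  have hΨeq : pd ex (fun p : P4 => TMEc * pd (0,1,0,0) (V u) p
      - TMac * pd (0,0,1,0) (V u) p + TMaE * pd (0,0,0,1) (V u) p)
      = fun p => TMEc * pd ex (pd (0,1,0,0) (V u)) p - TMac * pd ex (pd (0,0,1,0) (V u)) p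
        + TMaE * pd ex (pd (0,0,0,1) (V u)) p :=
    funext fun p => pd_comb TMEc TMac TMaE (hd1 _) (hd1 _) (hd1 _) ex p
  have hΨ'd : Differentiable ℝ (pd ex (fun p : P4 => TMEc * pd (0,1,0,0) (V u) p
      - TMac * pd (0,0,1,0) (V u) p + TMaE * pd (0,0,0,1) (V u) p)) := by
    rw [hΨeq]
    exact (((hd2 _ _).const_mul TMEc).sub ((hd2 _ _).const_mul TMac)).add
      ((hd2 _ _).const_mul TMaE)
  have hcomm : ∀ (w : P4) (p : P4),
      pd w (pd ex (pd ex (V u))) p = pd ex (pd ex (pd w (V u))) p := by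
    intro w p
    have h1 : pd w (pd ex (pd ex (V u))) p = pd ex (pd w (pd ex (V u))) p :=
      pd_comm (contDiff_pd2 h3 ex) w ex p
    have h2' : pd w (pd ex (V u)) = pd ex (pd w (V u)) :=
      funext fun p' => pd_comm h2 w ex p'
    rw [h1, h2']
  have main : ∀ x : ℝ, -c₀ * deriv (deriv φ) x + (c₀ - 1) * φ x
      - deriv f (u x a₀ E₀ c₀) * φ x
      = -TMEc + TMaE * (deriv (deriv (fun y => u y a₀ E₀ c₀)) x - u x a₀ E₀ c₀) := by
    intro x
    have kA := ode_key h3 hf hodepd x 1 0 0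
    have kE := ode_key h3 hf hodepd x 0 1 0
    have kC := ode_key h3 hf hodepd x 0 0 1
    rw [hcomm] at kA kE kC
    have hs2u : deriv (deriv (fun y => u y a₀ E₀ c₀)) x
        = pd ex (pd ex (V u)) (x, a₀, E₀, c₀) := deriv_slice2 hvd (hd1 ex) x a₀ E₀ c₀
    have hs2Ψ : deriv (deriv (fun y => TMEc * pd (0,1,0,0) (V u) (y, a₀, E₀, c₀)
        - TMac * pd (0,0,1,0) (V u) (y, a₀, E₀, c₀)
        + TMaE * pd (0,0,0,1) (V u) (y, a₀, E₀, c₀))) x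
        = pd ex (pd ex (fun p : P4 => TMEc * pd (0,1,0,0) (V u) p
          - TMac * pd (0,0,1,0) (V u) p + TMaE * pd (0,0,0,1) (V u) p)) (x, a₀, E₀, c₀) :=
      deriv_slice2 hΨd hΨ'd x a₀ E₀ c₀
    simp only [hφ]
    rw [hs2Ψ, hs2u, hΨeq,
      pd_comb TMEc TMac TMaE (hd2 _ _) (hd2 _ _) (hd2 _ _) ex (x, a₀, E₀, c₀)]
    have hVu : V u (x, a₀, E₀, c₀) = u x a₀ E₀ c₀ := rfl
    rw [← hVu]
    linear_combination (-TMEc) * kA + TMac * kE + (-TMaE) * kC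
  intro x
  refine ⟨main x, ?_⟩
  have heq : (fun y => -c₀ * deriv (deriv φ) y + (c₀ - 1) * φ y
      - deriv f (u y a₀ E₀ c₀) * φ y)
      = fun y => -TMEc + TMaE * (pd ex (pd ex (V u)) (y, a₀, E₀, c₀)
        - V u (y, a₀, E₀, c₀)) := by
    funext y
    have h2y : deriv (deriv (fun z => u z a₀ E₀ c₀)) y = pd ex (pd ex (V u)) (y, a₀, E₀, c₀) :=
      deriv_slice2 hvd (hd1 ex) y a₀ E₀ c₀
    rw [main y, h2y]
    rfl
  have hW : Differentiable ℝ (fun p : P4 => -TMEc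
      + TMaE * (pd ex (pd ex (V u)) p - V u p)) :=
    (((hd2 ex ex).sub hvd).const_mul TMaE).const_add (-TMEc)
  have hstep : deriv (fun y => -TMEc + TMaE * (pd ex (pd ex (V u)) (y, a₀, E₀, c₀)
      - V u (y, a₀, E₀, c₀))) x
      = pd ex (fun p : P4 => -TMEc + TMaE * (pd ex (pd ex (V u)) p - V u p))
          (x, a₀, E₀, c₀) := deriv_slice1 hW x a₀ E₀ c₀
  have hs3 : deriv (deriv (deriv (fun y => u y a₀ E₀ c₀))) x
      = pd ex (pd ex (pd ex (V u))) (x, a₀, E₀, c₀) :=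
    deriv_slice3 hvd (hd1 ex) (hd2 ex ex) x a₀ E₀ c₀
  have hs1 : deriv (fun y => u y a₀ E₀ c₀) x = pd ex (V u) (x, a₀, E₀, c₀) :=
    deriv_slice1 hvd x a₀ E₀ c₀
  rw [heq, hstep, pd_const_add (-TMEc) TMaE (hd2 ex ex) hvd ex (x, a₀, E₀, c₀), hs3, hs1]
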